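/- Let g be a cusp form of even weight ω for SL₂(ℤ) with Fourier expansion g(y) = Σ_{m≥1} A_m e^{2πimy}, and let L_g(s) = Σ_{m≥1} A_m m^{−s} (absolutely convergent for Re(s) large), which by Hecke's theorem extends to an entire function. Define c_n := −(Γ(n)/(2πi))·(2πi)^{−n}·L_g(n) for n ≥ 1 (equal to −(Γ(n)/(2πi))·Σ_{m≥1} A_m (2πim)^{−n} when the series converges absolutely). Then the formal power series f̃(y) = Σ_{n≥1} c_n yⁿ is Gevrey-1, its Borel transform B[f̃](ζ) converges for |ζ| < 2π, and B[f̃] extends to a meromorphic function on ℂ whose only singularities are simple poles at ζ_m = 2πim for m ∈ ℤ_{>0}, with residue A_m/(2πi) at ζ_m (Stokes constant −A_m). -/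

import Mathlib

noncomputable section

open Complex Filter Topology


noncomputable section
open Complex Filter Topology

def zet (m : ℕ) : ℂ := 2*Real.pi*Complex.I*((m:ℂ)+1)

lemma pi2_pos : (0:ℝ) < 2*Real.pi := by positivity

lemma pi2_ge_one : (1:ℝ) ≤ 2*Real.pi := by
  have := Real.pi_gt_three; linarith

lemma twopiI_ne : (2*Real.pi*Complex.I : ℂ) ≠ 0 := by
  simp [Real.pi_ne_zero, Complex.I_ne_zero]

lemma norm_twopiI : ‖(2*Real.pi*Complex.I : ℂ)‖ = 2*Real.pi := by
  simp [norm_mul, _root_.abs_of_nonneg Real.pi_pos.le]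

lemma norm_natCast_add_one (m : ℕ) : ‖((m:ℂ)+1)‖ = (m:ℝ)+1 := by
  rw [show ((m:ℂ)+1) = (((m+1:ℕ) : ℕ) : ℂ) by push_cast; ring]
  rw [Complex.norm_natCast]
  push_cast; ring

lemma zet_ne (m : ℕ) : zet m ≠ 0 := by
  apply mul_ne_zero twopiI_ne
  intro h
  have := congrArg norm h
  rw [norm_natCast_add_one, norm_zero] at this
  have : (0:ℝ) < (m:ℝ)+1 := by positivity
  linarith

lemma norm_zet (m : ℕ) : ‖zet m‖ = 2*Real.pi*((m:ℝ)+1) := by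
  rw [zet, norm_mul, norm_twopiI, norm_natCast_add_one]

lemma norm_zet_ge (m : ℕ) : 2*Real.pi ≤ ‖zet m‖ := by
  rw [norm_zet]
  nlinarith [Real.pi_pos, Nat.cast_nonneg (α := ℝ) m]

lemma summable_sq : Summable (fun m : ℕ => 1/((m:ℝ)+1)^2) := by
  have h : Summable (fun n : ℕ => 1/(n:ℝ)^2) := Real.summable_one_div_nat_pow.2 one_lt_two
  have := (summable_nat_add_iff 1).2 h
  refine this.congr (fun m => ?_)
  push_cast
  ring_nf

lemma lemBound (ω : ℕ) (B : ℕ → ℂ) (C : ℝ) (hC : 0 ≤ C)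
    (hB : ∀ m, ‖B m‖ ≤ C * ((m:ℝ)+1)^ω) (R δ : ℝ) (hδ : 0 < δ) (z : ℂ) (hzR : ‖z‖ ≤ R)
    (m : ℕ) (hd : B m ≠ 0 → δ ≤ dist z (zet m)) :
    ‖B m * (z^(ω+2)/(zet m^(ω+2)*(z - zet m)))‖
      ≤ (C * (R^(ω+2)/((2*Real.pi)^(ω+2)*δ))) * (1/((m:ℝ)+1)^2) := by
  have hR : 0 ≤ R := le_trans (norm_nonneg z) hzR
  by_cases hBm : B m = 0
  · rw [hBm]; simp; positivity
  · have hd' := hd hBm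
    have hm1 : (0:ℝ) < (m:ℝ)+1 := by positivity
    calc ‖B m * (z^(ω+2)/(zet m^(ω+2)*(z - zet m)))‖
        = ‖B m‖ * (‖z‖^(ω+2)/(‖zet m‖^(ω+2)*‖z - zet m‖)) := by
          rw [norm_mul, norm_div, norm_pow, norm_mul, norm_pow]
      _ ≤ (C * ((m:ℝ)+1)^ω) * (R^(ω+2)/((2*Real.pi*((m:ℝ)+1))^(ω+2)*δ)) := by
          have h1 : δ ≤ ‖z - zet m‖ := by rwa [dist_eq_norm] at hd'
          have h2 : (2*Real.pi*((m:ℝ)+1))^(ω+2) ≤ ‖zet m‖^(ω+2) := by rw [norm_zet]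
          gcongr
          · exact hB m
      _ = (C * (R^(ω+2)/((2*Real.pi)^(ω+2)*δ))) * (1/((m:ℝ)+1)^2) := by
          rw [mul_pow]
          field_simp
          ring

lemma lemS (ω : ℕ) (B : ℕ → ℂ) (C : ℝ) (hC : 0 ≤ C)
    (hB : ∀ m, ‖B m‖ ≤ C * ((m:ℝ)+1)^ω) (z : ℂ) (δ : ℝ) (hδ : 0 < δ)
    (hdist : ∀ m, B m ≠ 0 → δ ≤ dist z (zet m)) :
    Summable (fun m : ℕ => B m * (z^(ω+2) / (zet m^(ω+2) * (z - zet m)))) := by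
  apply Summable.of_norm_bounded
    (g := fun m : ℕ => (C * (‖z‖^(ω+2)/((2*Real.pi)^(ω+2)*δ))) * (1/((m:ℝ)+1)^2))
    (summable_sq.mul_left _)
  intro m
  exact lemBound ω B C hC hB ‖z‖ δ hδ z le_rfl m (hdist m)

lemma lemA (ω : ℕ) (B : ℕ → ℂ) (C : ℝ) (hC : 0 ≤ C)
    (hB : ∀ m, ‖B m‖ ≤ C * ((m:ℝ)+1)^ω)
    (z₀ : ℂ) (δ : ℝ) (hδ : 0 < δ)
    (hdist : ∀ m, B m ≠ 0 → ∀ z ∈ Metric.ball z₀ δ, δ ≤ dist z (zet m)) :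
    DifferentiableOn ℂ
      (fun z => ∑' m : ℕ, B m * (z^(ω+2) / (zet m^(ω+2) * (z - zet m))))
      (Metric.ball z₀ δ) := by
  apply differentiableOn_tsum_of_summable_norm
    (u := fun m : ℕ => (C * ((‖z₀‖+δ)^(ω+2)/((2*Real.pi)^(ω+2)*δ))) * (1/((m:ℝ)+1)^2))
    (summable_sq.mul_left _)
  · intro m
    by_cases hBm : B m = 0
    · simp only [hBm, zero_mul]
      exact differentiableOn_const 0
    · apply DifferentiableOn.const_mul
      apply DifferentiableOn.div
      · exact (differentiable_pow _).differentiableOn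
      · apply DifferentiableOn.mul (differentiableOn_const _)
        exact (differentiable_id.sub_const _).differentiableOn
      · intro z hz
        apply mul_ne_zero (pow_ne_zero _ (zet_ne m))
        rw [sub_ne_zero]
        intro h
        have := hdist m hBm z hz
        rw [h, dist_self] at this
        linarith
  · exact Metric.isOpen_ball
  · intro m w hw
    have hwR : ‖w‖ ≤ ‖z₀‖ + δ := by
      have : dist w z₀ < δ := Metric.mem_ball.1 hw
      calc ‖w‖ = ‖z₀ + (w - z₀)‖ := by ring_nf
        _ ≤ ‖z₀‖ + ‖w - z₀‖ := norm_add_le _ _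
        _ ≤ ‖z₀‖ + δ := by rw [← dist_eq_norm] at *; linarith
    exact lemBound ω B C hC hB (‖z₀‖+δ) δ hδ w hwR m (fun h => hdist m h w hw)

lemma clause1_aux (ω : ℕ) (A : ℕ → ℂ) (Lg : ℂ → ℂ) (c : ℕ → ℂ)
    (hLagree : ∀ s : ℂ, (ω : ℝ) + 1 < s.re →
      Lg s = ∑' m : ℕ, A (m + 1) / ((m : ℂ) + 1) ^ s)
    (hc : ∀ n : ℕ, 1 ≤ n →
      c n = -(((n - 1).factorial : ℂ) / (2 * Real.pi * I))
        * (2 * Real.pi * I : ℂ) ^ (-(n : ℤ)) * Lg (n : ℂ)) :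
    ∀ n : ℕ, (ω : ℝ) + 1 < (n : ℝ) →
      c n = -(((n - 1).factorial : ℂ) / (2 * Real.pi * I))
        * ∑' m : ℕ, A (m + 1) * (2 * Real.pi * I * ((m : ℂ) + 1)) ^ (-(n : ℤ)) := by
  intro n hn
  have hn1 : 1 ≤ n := by
    rcases Nat.eq_zero_or_pos n with h | h
    · subst h; simp at hn; linarith [Nat.cast_nonneg (α := ℝ) ω]
    · exact h
  rw [hc n hn1, hLagree (n:ℂ) (by simpa using hn), mul_assoc, ← tsum_mul_left]
  congr 1
  apply tsum_congr
  intro m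
  simp only [Complex.cpow_natCast, zpow_neg, zpow_natCast, mul_pow, mul_inv, div_eq_mul_inv]
  ring

lemma lgBound_aux (ω : ℕ) (A : ℕ → ℂ) (Lg : ℂ → ℂ) (C : ℝ) (hC : 0 < C)
    (hA : ∀ m : ℕ, 1 ≤ m → ‖A m‖ ≤ C * (m : ℝ) ^ ω)
    (hLagree : ∀ s : ℂ, (ω : ℝ) + 1 < s.re →
      Lg s = ∑' m : ℕ, A (m + 1) / ((m : ℂ) + 1) ^ s) :
    ∀ n : ℕ, ω + 2 ≤ n → ‖Lg (n:ℂ)‖ ≤ C * ∑' m : ℕ, 1/((m:ℝ)+1)^2 := by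
  intro n hn
  have hre : (ω : ℝ) + 1 < ((n:ℂ)).re := by
    simp only [Complex.natCast_re]
    have : (ω:ℝ) + 2 ≤ (n:ℝ) := by exact_mod_cast hn
    linarith
  rw [hLagree _ hre]
  have hterm : ∀ m : ℕ, ‖A (m+1) / ((m:ℂ)+1)^((n:ℕ):ℂ)‖ ≤ C * (1/((m:ℝ)+1)^2) := by
    intro m
    rw [Complex.cpow_natCast, norm_div, norm_pow, norm_natCast_add_one]
    have hm1 : (1:ℝ) ≤ (m:ℝ)+1 := by linarith [Nat.cast_nonneg (α := ℝ) m]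
    have h1 : ‖A (m+1)‖ ≤ C * ((m:ℝ)+1)^ω := by
      have := hA (m+1) (by omega)
      push_cast at this
      exact this
    calc ‖A (m+1)‖/((m:ℝ)+1)^n ≤ (C*((m:ℝ)+1)^ω)/((m:ℝ)+1)^n := by gcongr
      _ ≤ (C*((m:ℝ)+1)^ω)/((m:ℝ)+1)^(ω+2) := by
          have := pow_le_pow_right₀ hm1 hn
          gcongr
      _ = C * (1/((m:ℝ)+1)^2) := by
          rw [pow_add]
          field_simp
  have hs : Summable (fun m : ℕ => ‖A (m+1) / ((m:ℂ)+1)^((n:ℕ):ℂ)‖) :=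
    Summable.of_nonneg_of_le (fun m => norm_nonneg _) hterm (summable_sq.mul_left C)
  calc ‖∑' m : ℕ, A (m+1) / ((m:ℂ)+1)^((n:ℕ):ℂ)‖ ≤ ∑' m : ℕ, ‖A (m+1) / ((m:ℂ)+1)^((n:ℕ):ℂ)‖ :=
        norm_tsum_le_tsum_norm hs
    _ ≤ ∑' m : ℕ, C * (1/((m:ℝ)+1)^2) := Summable.tsum_le_tsum hterm hs (summable_sq.mul_left C)
    _ = C * ∑' m : ℕ, 1/((m:ℝ)+1)^2 := tsum_mul_left

lemma cBound_aux (ω : ℕ) (Lg : ℂ → ℂ) (c : ℕ → ℂ) (T : ℝ) (hT : 0 ≤ T)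
    (hLgb : ∀ n : ℕ, ω + 2 ≤ n → ‖Lg (n:ℂ)‖ ≤ T)
    (hc : ∀ n : ℕ, 1 ≤ n →
      c n = -(((n - 1).factorial : ℂ) / (2 * Real.pi * I))
        * (2 * Real.pi * I : ℂ) ^ (-(n : ℤ)) * Lg (n : ℂ)) :
    ∀ n : ℕ, ω + 2 ≤ n → ‖c n‖ ≤ ((n-1).factorial : ℝ) * T * ((2*Real.pi)⁻¹)^n := by
  intro n hn
  rw [hc n (by omega)]
  rw [norm_mul, norm_mul, norm_neg, norm_div, norm_zpow, norm_twopiI]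
  have h2 : ‖((n-1).factorial : ℂ)‖ = ((n-1).factorial : ℝ) := by
    rw [Complex.norm_natCast]
  rw [h2]
  have h3 : (2*Real.pi : ℝ) ^ (-(n:ℤ)) = ((2*Real.pi)⁻¹)^n := by
    rw [zpow_neg, zpow_natCast, inv_pow]
  rw [h3]
  have hfac : (0:ℝ) ≤ ((n-1).factorial : ℝ) := by positivity
  have hp : (0:ℝ) < 2*Real.pi := by positivity
  calc ((n-1).factorial : ℝ)/(2*Real.pi) * ((2*Real.pi)⁻¹)^n * ‖Lg (n:ℂ)‖
      ≤ ((n-1).factorial : ℝ)/1 * ((2*Real.pi)⁻¹)^n * T := by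
        gcongr
        · exact pi2_ge_one
        · exact hLgb n hn
    _ = ((n-1).factorial : ℝ) * T * ((2*Real.pi)⁻¹)^n := by ring

lemma gevrey_aux (ω : ℕ) (c : ℕ → ℂ) (T : ℝ) (hT : 0 ≤ T)
    (hcb : ∀ n : ℕ, ω + 2 ≤ n → ‖c n‖ ≤ ((n-1).factorial : ℝ) * T * ((2*Real.pi)⁻¹)^n) :
    ∃ Cst K : ℝ, 0 < Cst ∧ 0 < K ∧ ∀ n : ℕ, 1 ≤ n →
      ‖c n‖ ≤ Cst * K⁻¹ ^ n * (n.factorial : ℝ) := by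
  refine ⟨(∑ j ∈ Finset.range (ω+2), ‖c j‖) + T + 1, 1, ?_, one_pos, ?_⟩
  · have : (0:ℝ) ≤ ∑ j ∈ Finset.range (ω+2), ‖c j‖ :=
      Finset.sum_nonneg (fun j _ => norm_nonneg _)
    linarith
  · intro n hn
    set Cst := (∑ j ∈ Finset.range (ω+2), ‖c j‖) + T + 1 with hCst
    have hsum0 : (0:ℝ) ≤ ∑ j ∈ Finset.range (ω+2), ‖c j‖ :=
      Finset.sum_nonneg (fun j _ => norm_nonneg _)
    have hfac1 : (1:ℝ) ≤ (n.factorial : ℝ) := by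
      exact_mod_cast Nat.one_le_iff_ne_zero.2 n.factorial_ne_zero
    rw [inv_one, one_pow, mul_one]
    rcases lt_or_ge n (ω+2) with h | h
    · have h1 : ‖c n‖ ≤ ∑ j ∈ Finset.range (ω+2), ‖c j‖ :=
        Finset.single_le_sum (f := fun j => ‖c j‖) (fun j _ => norm_nonneg _)
          (Finset.mem_range.2 h)
      have h2 : ‖c n‖ ≤ Cst := by rw [hCst]; linarith
      calc ‖c n‖ ≤ Cst := h2
        _ = Cst * 1 := (mul_one _).symm
        _ ≤ Cst * (n.factorial : ℝ) := by
            have hCpos : 0 < Cst := by rw [hCst]; linarith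
            exact mul_le_mul_of_nonneg_left hfac1 hCpos.le
    · have h1 := hcb n h
      have hip : ((2*Real.pi)⁻¹ : ℝ) ≤ 1 := by
        rw [inv_le_one_iff₀]; right; exact pi2_ge_one
      have hipn : ((2*Real.pi)⁻¹ : ℝ)^n ≤ 1 := by
        apply pow_le_one₀ (by positivity) hip
      have hf : ((n-1).factorial : ℝ) ≤ (n.factorial : ℝ) := by
        exact_mod_cast Nat.factorial_le (by omega)
      calc ‖c n‖ ≤ ((n-1).factorial : ℝ) * T * ((2*Real.pi)⁻¹)^n := h1
        _ ≤ (n.factorial : ℝ) * T * 1 := by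
            apply mul_le_mul (by apply mul_le_mul_of_nonneg_right hf hT) hipn (by positivity)
            positivity
        _ ≤ Cst * (n.factorial : ℝ) := by
            rw [mul_one, mul_comm]
            apply mul_le_mul_of_nonneg_right _ (by positivity)
            rw [hCst]; linarith

lemma disc_aux (ω : ℕ) (c : ℕ → ℂ) (T : ℝ) (hT : 0 ≤ T)
    (hcb : ∀ n : ℕ, ω + 2 ≤ n → ‖c n‖ ≤ ((n-1).factorial : ℝ) * T * ((2*Real.pi)⁻¹)^n) :
    ∀ z : ℂ, ‖z‖ < 2 * Real.pi →
      Summable fun k : ℕ => c (k + 1) / (k.factorial : ℂ) * z ^ k := by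
  intro z hz
  have hp : (0:ℝ) < 2*Real.pi := by positivity
  set r : ℝ := ‖z‖ / (2*Real.pi) with hr
  have hr0 : 0 ≤ r := by positivity
  have hr1 : r < 1 := (div_lt_one hp).2 hz
  apply (summable_nat_add_iff (ω+1)).1
  have hgeom : Summable (fun k : ℕ => T * r ^ (k + (ω+1))) :=
    (((summable_geometric_of_lt_one hr0 hr1).comp_injective
      (add_left_injective (ω+1))).mul_left T)
  apply Summable.of_norm_bounded hgeom
  intro k
  set n : ℕ := k + (ω+1) with hn
  have hn2 : ω + 2 ≤ n + 1 := by omega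
  have hb := hcb (n+1) hn2
  have hfacpos : (0:ℝ) < (n.factorial : ℝ) := by positivity
  have h1 : ‖c (n+1) / (n.factorial : ℂ) * z ^ n‖ = ‖c (n+1)‖ / (n.factorial : ℝ) * ‖z‖^n := by
    rw [norm_mul, norm_div, norm_pow, Complex.norm_natCast]
  calc ‖c (n+1) / ((n).factorial : ℂ) * z ^ (n)‖
      = ‖c (n+1)‖ / (n.factorial : ℝ) * ‖z‖^n := h1
    _ ≤ (((n+1-1).factorial : ℝ) * T * ((2*Real.pi)⁻¹)^(n+1)) / (n.factorial : ℝ) * ‖z‖^n := by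
        gcongr
    _ = T * (((2*Real.pi)⁻¹)^(n+1) * ‖z‖^n) := by
        simp only [Nat.add_sub_cancel]
        field_simp
    _ ≤ T * r ^ n := by
        apply mul_le_mul_of_nonneg_left _ hT
        rw [hr, div_pow, pow_succ]
        have : ((2*Real.pi)^n)⁻¹ * ‖z‖^n = ‖z‖^n / (2*Real.pi)^n := by ring
        have h2 : ((2*Real.pi)⁻¹ : ℝ) ≤ 1 := by
          rw [inv_le_one_iff₀]; right; exact pi2_ge_one
        calc ((2*Real.pi)⁻¹:ℝ)^n * (2*Real.pi)⁻¹ * ‖z‖^n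
            ≤ ((2*Real.pi)⁻¹:ℝ)^n * 1 * ‖z‖^n := by gcongr
          _ = ‖z‖^n / (2*Real.pi)^n := by rw [inv_pow]; ring

lemma tsumEq_aux (ω : ℕ) (A : ℕ → ℂ) (c : ℕ → ℂ) (C : ℝ) (hC : 0 < C)
    (hA' : ∀ m : ℕ, ‖A (m+1)‖ ≤ C * ((m:ℝ)+1)^ω)
    (clause1 : ∀ n : ℕ, (ω : ℝ) + 1 < (n : ℝ) →
      c n = -(((n - 1).factorial : ℂ) / (2 * Real.pi * I))
        * ∑' m : ℕ, A (m + 1) * (2 * Real.pi * I * ((m : ℂ) + 1)) ^ (-(n : ℤ)))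
    (z : ℂ) (hz : ‖z‖ < 2 * Real.pi)
    (hsum : Summable fun k : ℕ => c (k + 1) / (k.factorial : ℂ) * z ^ k) :
    (∑ k ∈ Finset.range (ω+2), c (k + 1) / (k.factorial : ℂ) * z ^ k)
      + (1/(2*Real.pi*I)) * ∑' m : ℕ, A (m+1) * (z^(ω+2) / (zet m^(ω+2) * (z - zet m)))
      = ∑' k : ℕ, c (k + 1) / (k.factorial : ℂ) * z ^ k := by
  rw [← Summable.sum_add_tsum_nat_add (ω+2) hsum]
  congr 1
  -- notation
  set D : ℕ → ℕ → ℂ := fun k m => A (m+1) * (((zet m)^(k+(ω+2)+1))⁻¹ * z^(k+(ω+2))) with hD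
  have hzr : (0:ℝ) ≤ ‖z‖ / (2*Real.pi) := by positivity
  have hzr1 : ‖z‖ / (2*Real.pi) < 1 := (div_lt_one pi2_pos).2 hz
  -- Step A
  have stepA : ∀ k : ℕ, c (k + (ω+2) + 1) / (((k + (ω+2)).factorial : ℕ) : ℂ) * z ^ (k + (ω+2))
      = -(1/(2*Real.pi*I)) * ∑' m : ℕ, D k m := by
    intro k
    have h1 := clause1 (k + (ω+2) + 1) (by push_cast; linarith [Nat.cast_nonneg (α := ℝ) k])
    have h2 : (k + (ω+2) + 1) - 1 = k + (ω+2) := by omega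
    rw [h2] at h1
    rw [h1]
    have hfac : (((k + (ω+2)).factorial : ℕ) : ℂ) ≠ 0 :=
      Nat.cast_ne_zero.2 (Nat.factorial_ne_zero _)
    have h3 : ∑' m : ℕ, D k m = z^(k+(ω+2))
        * ∑' m : ℕ, A (m + 1) * (2 * Real.pi * I * ((m : ℂ) + 1)) ^ (-((k + (ω+2) + 1 : ℕ) : ℤ)) := by
      rw [← tsum_mul_left]
      apply tsum_congr; intro m
      show A (m+1) * (((zet m)^(k+(ω+2)+1))⁻¹ * z^(k+(ω+2))) = _
      rw [zpow_neg, zpow_natCast, zet]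
      ring
    rw [h3]
    field_simp
  -- Step B : Fubini
  have hub : Summable (Function.uncurry (fun m k => D k m)) := by
    apply Summable.of_norm_bounded
      (g := fun q : ℕ × ℕ => (C * (1/((q.1:ℝ)+1)^2)) * (‖z‖/(2*Real.pi))^q.2)
    · exact (summable_sq.mul_left C).mul_of_nonneg
        (summable_geometric_of_lt_one hzr hzr1)
        (fun m => by positivity) (fun k => by positivity)
    · rintro ⟨m, k⟩
      show ‖D k m‖ ≤ _
      have hx1 : (1:ℝ) ≤ (m:ℝ)+1 := by linarith [Nat.cast_nonneg (α := ℝ) m]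
      have hxpos : (0:ℝ) < (m:ℝ)+1 := by linarith
      have hP1 : (1:ℝ) ≤ 2*Real.pi := pi2_ge_one
      have hnorm : ‖D k m‖ = ‖A (m+1)‖ * ((‖zet m‖^(k+(ω+2)+1))⁻¹ * ‖z‖^(k+(ω+2))) := by
        show ‖A (m+1) * (((zet m)^(k+(ω+2)+1))⁻¹ * z^(k+(ω+2)))‖ = _
        rw [norm_mul, norm_mul, norm_inv, norm_pow, norm_pow]
      rw [hnorm, norm_zet]
      calc ‖A (m+1)‖ * (((2*Real.pi*((m:ℝ)+1))^(k+(ω+2)+1))⁻¹ * ‖z‖^(k+(ω+2)))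
          ≤ (C*((m:ℝ)+1)^ω) * (((2*Real.pi*((m:ℝ)+1))^(k+(ω+2)+1))⁻¹ * ‖z‖^(k+(ω+2))) := by
            gcongr
            exact hA' m
        _ = (C * (1/((m:ℝ)+1)^2)) * ((‖z‖/(2*Real.pi))^(k+(ω+2))
              * ((2*Real.pi) * ((m:ℝ)+1)^(k+1))⁻¹) := by
            rw [mul_pow, div_pow]
            field_simp
            ring
        _ ≤ (C * (1/((m:ℝ)+1)^2)) * ((‖z‖/(2*Real.pi))^k * 1) := by
            apply mul_le_mul_of_nonneg_left _ (by positivity)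
            apply mul_le_mul
            · exact pow_le_pow_of_le_one hzr hzr1.le (Nat.le_add_right k (ω+2))
            · have h1 : (1:ℝ) ≤ ((m:ℝ)+1)^(k+1) := one_le_pow₀ hx1
              have h2 : (1:ℝ) ≤ 2*Real.pi*((m:ℝ)+1)^(k+1) := by nlinarith
              exact inv_le_one_of_one_le₀ h2
            · positivity
            · positivity
        _ = (C * (1/((m:ℝ)+1)^2)) * (‖z‖/(2*Real.pi))^k := by rw [mul_one]
  have hswap : ∑' k : ℕ, ∑' m : ℕ, D k m = ∑' m : ℕ, ∑' k : ℕ, D k m :=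
    Summable.tsum_comm (f := fun m k => D k m) hub
  -- Step C : geometric sum
  have stepC : ∀ m : ℕ, ∑' k : ℕ, D k m
      = -(A (m+1) * (z^(ω+2) / (zet m^(ω+2) * (z - zet m)))) := by
    intro m
    have hζ := zet_ne m
    have hzlt : ‖z‖ < ‖zet m‖ := lt_of_lt_of_le hz (norm_zet_ge m)
    have hζpos : (0:ℝ) < ‖zet m‖ := norm_pos_iff.mpr hζ
    have hnorm : ‖z * (zet m)⁻¹‖ < 1 := by
      rw [norm_mul, norm_inv, ← div_eq_mul_inv, div_lt_one hζpos]
      exact hzlt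
    have hzζ : z - zet m ≠ 0 := by
      intro h
      rw [sub_eq_zero] at h
      rw [h] at hzlt
      exact lt_irrefl _ hzlt
    have hterm : ∀ k : ℕ, D k m
        = (A (m+1) * (z^(ω+2) * ((zet m)^(ω+3))⁻¹)) * (z * (zet m)⁻¹)^k := by
      intro k
      show A (m+1) * (((zet m)^(k+(ω+2)+1))⁻¹ * z^(k+(ω+2))) = _
      rw [mul_pow, inv_pow]
      field_simp
      ring
    have hζz : zet m - z ≠ 0 := fun h => hzζ (by rw [← neg_sub] at h; simpa using neg_eq_zero.1 h)
    have hone' : (1:ℂ) - z * (zet m)⁻¹ = (zet m - z) * (zet m)⁻¹ := by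
      field_simp
    calc ∑' k : ℕ, D k m
        = ∑' k : ℕ, (A (m+1) * (z^(ω+2) * ((zet m)^(ω+3))⁻¹)) * (z * (zet m)⁻¹)^k :=
          tsum_congr hterm
      _ = (A (m+1) * (z^(ω+2) * ((zet m)^(ω+3))⁻¹)) * (1 - z*(zet m)⁻¹)⁻¹ := by
          rw [tsum_mul_left, tsum_geometric_of_norm_lt_one hnorm]
      _ = -(A (m+1) * (z^(ω+2) / (zet m^(ω+2) * (z - zet m)))) := by
          rw [hone', mul_inv, inv_inv]
          field_simp
          ring
  -- Step D : assembly
  calc (1/(2*Real.pi*I)) * ∑' m : ℕ, A (m+1) * (z^(ω+2) / (zet m^(ω+2) * (z - zet m)))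
      = -(1/(2*Real.pi*I)) * -(∑' m : ℕ, A (m+1) * (z^(ω+2) / (zet m^(ω+2) * (z - zet m)))) := by
        ring
    _ = -(1/(2*Real.pi*I)) * ∑' m : ℕ, -(A (m+1) * (z^(ω+2) / (zet m^(ω+2) * (z - zet m)))) := by
        rw [tsum_neg]
    _ = -(1/(2*Real.pi*I)) * ∑' m : ℕ, ∑' k : ℕ, D k m := by
        rw [tsum_congr stepC]
    _ = -(1/(2*Real.pi*I)) * ∑' k : ℕ, ∑' m : ℕ, D k m := by rw [hswap]
    _ = ∑' k : ℕ, -(1/(2*Real.pi*I)) * ∑' m : ℕ, D k m := tsum_mul_left.symm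
    _ = ∑' k : ℕ, c (k + (ω+2) + 1) / (((k + (ω+2)).factorial : ℕ) : ℂ) * z ^ (k + (ω+2)) :=
        (tsum_congr stepA).symm

lemma diff_aux (ω : ℕ) (A : ℕ → ℂ) (c : ℕ → ℂ) (C : ℝ) (hC : 0 < C)
    (hA' : ∀ m : ℕ, ‖A (m+1)‖ ≤ C * ((m:ℝ)+1)^ω)
    (z : ℂ) (hzne : ∀ m : ℕ, z ≠ 2 * Real.pi * I * ((m : ℂ) + 1)) :
    DifferentiableAt ℂ (fun w =>
      (∑ k ∈ Finset.range (ω+2), c (k + 1) / (k.factorial : ℂ) * w ^ k)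
      + (1/(2*Real.pi*I)) * ∑' m : ℕ, A (m+1) * (w^(ω+2) / (zet m^(ω+2) * (w - zet m)))) z := by
  apply DifferentiableAt.add
  · apply DifferentiableAt.fun_sum
    intro k _
    exact (differentiableAt_const _).mul (differentiableAt_pow k)
  · set M := Nat.ceil ‖z‖ with hM
    have hne : ∀ m : ℕ, z ≠ zet m := fun m => hzne m
    have hδ1ne : (Finset.range (M+1)).Nonempty := ⟨0, Finset.mem_range.2 (by omega)⟩
    set δ1 := (Finset.range (M+1)).inf' hδ1ne (fun m => dist z (zet m)) with hδ1
    have hδ1pos : 0 < δ1 := by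
      rw [hδ1, Finset.lt_inf'_iff]
      intro m _
      rw [dist_pos]
      exact hne m
    set δ := min 1 (δ1/2) with hδdef
    have hδ : 0 < δ := lt_min one_pos (by linarith)
    have hδ1' : δ ≤ δ1/2 := min_le_right _ _
    have hδle1 : δ ≤ 1 := min_le_left _ _
    have hdist : ∀ m : ℕ, A (m+1) ≠ 0 → ∀ w ∈ Metric.ball z δ, δ ≤ dist w (zet m) := by
      intro m _ w hw
      have hwz : dist w z < δ := Metric.mem_ball.1 hw
      rcases le_or_gt m M with hm | hm
      · have h1 : δ1 ≤ dist z (zet m) :=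
          Finset.inf'_le _ (Finset.mem_range.2 (by omega))
        have tri : dist z (zet m) ≤ dist z w + dist w (zet m) := dist_triangle _ _ _
        rw [dist_comm z w] at tri
        linarith
      · have hMz : ‖z‖ ≤ (M:ℝ) := Nat.le_ceil _
        have h2 : (M:ℝ) + 1 ≤ (m:ℝ) := by exact_mod_cast hm
        have hzw : ‖w‖ ≤ ‖z‖ + δ := by
          calc ‖w‖ = ‖z + (w - z)‖ := by ring_nf
            _ ≤ ‖z‖ + ‖w - z‖ := norm_add_le _ _
            _ ≤ ‖z‖ + δ := by rw [← dist_eq_norm] at *; linarith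
        have h3 : ‖zet m‖ - ‖w‖ ≤ dist w (zet m) := by
          rw [dist_eq_norm, norm_sub_rev]
          exact norm_sub_norm_le _ _
        rw [norm_zet] at h3
        nlinarith [Real.pi_gt_three, Nat.cast_nonneg (α := ℝ) M]
    have hdiff := lemA ω (fun m => A (m+1)) C hC.le hA' z δ hδ hdist
    exact DifferentiableAt.const_mul
      (hdiff.differentiableAt (Metric.isOpen_ball.mem_nhds (Metric.mem_ball_self hδ))) _

lemma resid_aux (ω : ℕ) (A : ℕ → ℂ) (c : ℕ → ℂ) (C : ℝ) (hC : 0 < C)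
    (hA' : ∀ m : ℕ, ‖A (m+1)‖ ≤ C * ((m:ℝ)+1)^ω) (m₀ : ℕ) :
    Filter.Tendsto
      (fun w : ℂ => (w - 2 * Real.pi * I * ((m₀ : ℂ) + 1)) *
        ((∑ k ∈ Finset.range (ω+2), c (k + 1) / (k.factorial : ℂ) * w ^ k)
        + (1/(2*Real.pi*I)) * ∑' m : ℕ, A (m+1) * (w^(ω+2) / (zet m^(ω+2) * (w - zet m)))))
      (nhdsWithin (2 * Real.pi * I * ((m₀ : ℂ) + 1)) {(2 * Real.pi * I * ((m₀ : ℂ) + 1))}ᶜ)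
      (nhds (A (m₀ + 1) / (2 * Real.pi * I))) := by
  have hζ0eq : (2 * Real.pi * I * ((m₀ : ℂ) + 1)) = zet m₀ := rfl
  rw [hζ0eq]
  set B' : ℕ → ℂ := fun m => if m = m₀ then 0 else A (m+1) with hB'def
  have hB' : ∀ m : ℕ, ‖B' m‖ ≤ C * ((m:ℝ)+1)^ω := by
    intro m
    by_cases h : m = m₀
    · simp only [hB'def, h, if_pos rfl, norm_zero]
      positivity
    · simp only [hB'def, if_neg h]
      exact hA' m
  have hdistc : ∀ m : ℕ, B' m ≠ 0 → ∀ w ∈ Metric.ball (zet m₀) 1, 1 ≤ dist w (zet m) := by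
    intro m hm w hw
    have hmm : m ≠ m₀ := by
      intro h
      apply hm
      simp [hB'def, h]
    have hzz : 2*Real.pi ≤ dist (zet m₀) (zet m) := by
      rw [dist_eq_norm]
      have heq : zet m₀ - zet m = 2*Real.pi*Complex.I*(((m₀:ℂ)) - (m:ℂ)) := by
        rw [zet, zet]; ring
      rw [heq, norm_mul, norm_twopiI]
      have h1 : (1:ℝ) ≤ ‖((m₀:ℂ) - (m:ℂ))‖ := by
        rw [show ((m₀:ℂ) - (m:ℂ)) = (((m₀:ℤ) - (m:ℤ) : ℤ) : ℂ) by push_cast; ring,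
          Complex.norm_intCast]
        have hne0 : ((m₀:ℤ) - (m:ℤ)) ≠ 0 := by
          intro h; apply hmm; omega
        have h2 := Int.one_le_abs hne0
        exact_mod_cast h2
      nlinarith [Real.pi_gt_three]
    have hwz : dist w (zet m₀) < 1 := Metric.mem_ball.1 hw
    have tri : dist (zet m₀) (zet m) ≤ dist (zet m₀) w + dist w (zet m) := dist_triangle _ _ _
    rw [dist_comm (zet m₀) w] at tri
    nlinarith [Real.pi_gt_three]
  have hFd : DifferentiableAt ℂ
      (fun w => ∑' m : ℕ, B' m * (w^(ω+2) / (zet m^(ω+2) * (w - zet m)))) (zet m₀) :=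
    (lemA ω B' C hC.le hB' (zet m₀) 1 one_pos hdistc).differentiableAt
      (Metric.isOpen_ball.mem_nhds (Metric.mem_ball_self one_pos))
  set Φ : ℂ → ℂ := fun w =>
    (w - zet m₀) * ((∑ k ∈ Finset.range (ω+2), c (k + 1) / (k.factorial : ℂ) * w ^ k)
      + (1/(2*Real.pi*I)) * ∑' m : ℕ, B' m * (w^(ω+2) / (zet m^(ω+2) * (w - zet m))))
    + (1/(2*Real.pi*I)) * (A (m₀+1) * (w^(ω+2) * ((zet m₀^(ω+2))⁻¹))) with hΦdef
  have hΦc : ContinuousAt Φ (zet m₀) := by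
    apply ContinuousAt.add
    · apply ContinuousAt.mul
      · exact (continuous_id.sub continuous_const).continuousAt
      · apply ContinuousAt.add
        · exact (continuous_finset_sum _
            (fun k _ => continuous_const.mul (continuous_pow k))).continuousAt
        · exact continuousAt_const.mul hFd.continuousAt
    · exact continuousAt_const.mul (continuousAt_const.mul
        ((continuous_pow (ω+2)).continuousAt.mul continuousAt_const))
  have hΦ0 : Φ (zet m₀) = A (m₀ + 1) / (2 * Real.pi * I) := by
    rw [hΦdef]
    simp only [sub_self, zero_mul, zero_add]
    rw [mul_inv_cancel₀ (pow_ne_zero _ (zet_ne m₀)), mul_one]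
    field_simp
  have key : ∀ w ∈ Metric.ball (zet m₀) 1 \ {zet m₀},
      (w - zet m₀) * ((∑ k ∈ Finset.range (ω+2), c (k + 1) / (k.factorial : ℂ) * w ^ k)
        + (1/(2*Real.pi*I)) * ∑' m : ℕ, A (m+1) * (w^(ω+2) / (zet m^(ω+2) * (w - zet m))))
      = Φ w := by
    rintro w ⟨hw1, hw2⟩
    have hwne : w ≠ zet m₀ := hw2
    have hs1 : Summable (fun m : ℕ => B' m * (w^(ω+2) / (zet m^(ω+2) * (w - zet m)))) :=
      lemS ω B' C hC.le hB' w 1 one_pos (fun m hm => hdistc m hm w hw1)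
    have hs2 : HasSum (fun m : ℕ => if m = m₀ then
        (A (m₀+1) * (w^(ω+2) / (zet m₀^(ω+2) * (w - zet m₀)))) else 0)
        (A (m₀+1) * (w^(ω+2) / (zet m₀^(ω+2) * (w - zet m₀)))) := hasSum_ite_eq m₀ _
    have hsplit : (fun m : ℕ => A (m+1) * (w^(ω+2) / (zet m^(ω+2) * (w - zet m))))
        = fun m => B' m * (w^(ω+2) / (zet m^(ω+2) * (w - zet m)))
          + (if m = m₀ then (A (m₀+1) * (w^(ω+2) / (zet m₀^(ω+2) * (w - zet m₀)))) else 0) := by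
      funext m
      by_cases h : m = m₀
      · subst h
        simp [hB'def]
      · simp [hB'def, h]
    have htsum : ∑' m : ℕ, A (m+1) * (w^(ω+2) / (zet m^(ω+2) * (w - zet m)))
        = (∑' m : ℕ, B' m * (w^(ω+2) / (zet m^(ω+2) * (w - zet m))))
          + A (m₀+1) * (w^(ω+2) / (zet m₀^(ω+2) * (w - zet m₀))) := by
      rw [hsplit, Summable.tsum_add hs1 hs2.summable, hs2.tsum_eq]
    rw [htsum, hΦdef]
    have hwζ : w - zet m₀ ≠ 0 := sub_ne_zero.2 hwne
    have hz0p : zet m₀^(ω+2) ≠ 0 := pow_ne_zero _ (zet_ne m₀)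
    have ht : (w - zet m₀) * (A (m₀+1) * (w^(ω+2)/(zet m₀^(ω+2)*(w - zet m₀))))
        = A (m₀+1) * (w^(ω+2) * ((zet m₀^(ω+2))⁻¹)) := by
      field_simp
    calc (w - zet m₀) * ((∑ k ∈ Finset.range (ω+2), c (k + 1) / (k.factorial : ℂ) * w ^ k)
          + (1/(2*Real.pi*I)) * ((∑' m : ℕ, B' m * (w^(ω+2) / (zet m^(ω+2) * (w - zet m))))
            + A (m₀+1) * (w^(ω+2) / (zet m₀^(ω+2) * (w - zet m₀)))))
        = (w - zet m₀) * ((∑ k ∈ Finset.range (ω+2), c (k + 1) / (k.factorial : ℂ) * w ^ k)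
          + (1/(2*Real.pi*I)) * ∑' m : ℕ, B' m * (w^(ω+2) / (zet m^(ω+2) * (w - zet m))))
          + (1/(2*Real.pi*I)) * ((w - zet m₀)
            * (A (m₀+1) * (w^(ω+2)/(zet m₀^(ω+2)*(w - zet m₀))))) := by ring
      _ = _ := by rw [ht]
  have hmem : Metric.ball (zet m₀) 1 \ {zet m₀} ∈ nhdsWithin (zet m₀) {(zet m₀)}ᶜ := by
    rw [Set.diff_eq]
    exact Filter.inter_mem (mem_nhdsWithin_of_mem_nhds (Metric.ball_mem_nhds _ one_pos))
      self_mem_nhdsWithin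
  have h1 : Filter.Tendsto Φ (nhdsWithin (zet m₀) {(zet m₀)}ᶜ)
      (nhds (A (m₀ + 1) / (2 * Real.pi * I))) := by
    rw [← hΦ0]
    exact hΦc.continuousWithinAt.tendsto
  exact h1.congr' (Filter.eventuallyEq_of_mem hmem (fun w hw => (key w hw).symm))

/-- For a cusp form `g` of even weight `ω` for `SL₂(ℤ)` with Fourier
coefficients `A_m` and entire L-function `L_g`, the series `f̃(y) = Σ_{n≥1} c_n yⁿ` with
`c_n = -(Γ(n)/2πi)(2πi)^{-n} L_g(n)` is Gevrey-1, its Borel transform converges on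
`‖ζ‖ < 2π`, and it extends to a meromorphic function on ℂ whose only singularities are
simple poles at `2πim`, `m ≥ 1`, with residue `A_m/(2πi)` (Stokes constant `-A_m`). -/
theorem stmt14 (ω : ℕ) (hω : Even ω)
    (g : ℂ → ℂ) (A : ℕ → ℂ)
    (hghol : DifferentiableOn ℂ g {y : ℂ | 0 < y.im})
    -- modularity for SL₂(ℤ)
    (hmod : ∀ a b c d : ℤ, a * d - b * c = 1 → ∀ y : ℂ, 0 < y.im →
      g (((a : ℂ) * y + b) / ((c : ℂ) * y + d)) = ((c : ℂ) * y + d) ^ ω * g y)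
    -- Fourier expansion (vanishing at the cusp)
    (hfour : ∀ y : ℂ, 0 < y.im →
      g y = ∑' m : ℕ, A (m + 1) * Complex.exp (2 * Real.pi * I * ((m : ℂ) + 1) * y))
    -- Hecke bound on the Fourier coefficients
    (C : ℝ) (hC : 0 < C) (hA : ∀ m : ℕ, 1 ≤ m → ‖A m‖ ≤ C * (m : ℝ) ^ ω)
    -- the entire continuation of L_g (Hecke's theorem)
    (Lg : ℂ → ℂ) (hLent : Differentiable ℂ Lg)
    (hLagree : ∀ s : ℂ, (ω : ℝ) + 1 < s.re →
      Lg s = ∑' m : ℕ, A (m + 1) / ((m : ℂ) + 1) ^ s)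
    (c : ℕ → ℂ)
    (hc : ∀ n : ℕ, 1 ≤ n →
      c n = -(((n - 1).factorial : ℂ) / (2 * Real.pi * I))
        * (2 * Real.pi * I : ℂ) ^ (-(n : ℤ)) * Lg (n : ℂ)) :
    -- c n agrees with the absolutely convergent series when n > ω + 1
    (∀ n : ℕ, (ω : ℝ) + 1 < (n : ℝ) →
      c n = -(((n - 1).factorial : ℂ) / (2 * Real.pi * I))
        * ∑' m : ℕ, A (m + 1) * (2 * Real.pi * I * ((m : ℂ) + 1)) ^ (-(n : ℤ))) ∧
    -- f̃ is Gevrey-1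
    (∃ Cst K : ℝ, 0 < Cst ∧ 0 < K ∧ ∀ n : ℕ, 1 ≤ n →
      ‖c n‖ ≤ Cst * K⁻¹ ^ n * (n.factorial : ℝ)) ∧
    -- the Borel transform Σ_{n≥1} (c_n/Γ(n)) ζ^{n-1} converges on ‖ζ‖ < 2π ...
    (∀ z : ℂ, ‖z‖ < 2 * Real.pi →
      Summable fun k : ℕ => c (k + 1) / (k.factorial : ℂ) * z ^ k) ∧
    -- ... and extends to a meromorphic function whose only singularities are simple
    -- poles at 2πim with residue A_m/(2πi)
    (∃ G : ℂ → ℂ,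
      (∀ z : ℂ, ‖z‖ < 2 * Real.pi →
        G z = ∑' k : ℕ, c (k + 1) / (k.factorial : ℂ) * z ^ k) ∧
      (∀ z : ℂ, (∀ m : ℕ, z ≠ 2 * Real.pi * I * ((m : ℂ) + 1)) →
        DifferentiableAt ℂ G z) ∧
      (∀ m : ℕ, Tendsto
        (fun z : ℂ => (z - 2 * Real.pi * I * ((m : ℂ) + 1)) * G z)
        (𝓝[≠] (2 * Real.pi * I * ((m : ℂ) + 1)))
        (𝓝 (A (m + 1) / (2 * Real.pi * I))))) := by
  
  have hA' : ∀ m : ℕ, ‖A (m+1)‖ ≤ C * ((m:ℝ)+1)^ω := by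
    intro m
    have := hA (m+1) (by omega)
    push_cast at this
    exact this
  have hc1 := clause1_aux ω A Lg c hLagree hc
  have hLgb := lgBound_aux ω A Lg C hC hA hLagree
  have hT : (0:ℝ) ≤ C * ∑' m : ℕ, 1/((m:ℝ)+1)^2 :=
    mul_nonneg hC.le (tsum_nonneg (fun m => by positivity))
  have hcb := cBound_aux ω Lg c (C * ∑' m : ℕ, 1/((m:ℝ)+1)^2) hT hLgb hc
  have hdisc := disc_aux ω c (C * ∑' m : ℕ, 1/((m:ℝ)+1)^2) hT hcb
  refine ⟨hc1, gevrey_aux ω c (C * ∑' m : ℕ, 1/((m:ℝ)+1)^2) hT hcb, hdisc,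
    fun z => (∑ k ∈ Finset.range (ω+2), c (k + 1) / (k.factorial : ℂ) * z ^ k)
      + (1/(2*Real.pi*I)) * ∑' m : ℕ, A (m+1) * (z^(ω+2) / (zet m^(ω+2) * (z - zet m))),
    fun z hz => tsumEq_aux ω A c C hC hA' hc1 z hz (hdisc z hz),
    fun z hzne => diff_aux ω A c C hC hA' z hzne,
    fun m₀ => resid_aux ω A c C hC hA' m₀⟩
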